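/- arXiv:2011.00315 — 3 statements merged into one kernel-verified Lean document; each statement's English description precedes it below -/
import Mathlib

section
/- For each integer n ≥ 0 and every r > 0, the modified Bessel functions of the first kind satisfy I_{n+1}'(r)/I_{n+1}(r) > I_n'(r)/I_n(r). -/
/-- Modified Bessel function of the first kind of integer order. -/
noncomputable def besselI (n : ℕ) (r : ℝ) : ℝ :=
  ∑' k : ℕ, (r / 2) ^ (n + 2 * k) / ((Nat.factorial k : ℝ) * (Nat.factorial (n + k) : ℝ))

open Finset Filter


open Finset

private lemma vand (m M t : ℕ) :
    ∑ k ∈ Finset.range (m+1), m.choose k * M.choose (t+k) = (m+M).choose (t+m) := by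
  rw [Nat.add_choose_eq, Finset.Nat.sum_antidiagonal_eq_sum_range_succ_mk]
  have hsub : Finset.range (m+1) ⊆ Finset.range (t+m+1) := by
    apply Finset.range_subset_range.2; omega
  rw [← Finset.sum_subset hsub (fun x _ hx => by
    have : m < x := by simp at hx ⊢; omega
    simp [Nat.choose_eq_zero_of_lt this])]
  rw [← Finset.sum_range_reflect]
  apply Finset.sum_congr rfl
  intro k hk
  have hk' : k ≤ m := by simp at hk; omega
  have h1 : m + 1 - 1 - k = m - k := by omega
  rw [h1, Nat.choose_symm hk']
  congr 2
  omega

private lemma fact_ne (m : ℕ) : ((m.factorial : ℝ)) ≠ 0 := by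
  exact_mod_cast m.factorial_ne_zero

private lemma sumS (μ ν m : ℕ) :
    ∑ k ∈ Finset.range (m+1),
      (1:ℝ)/(k.factorial * (μ+k).factorial * (m-k).factorial * (ν+(m-k)).factorial)
      = ((μ+ν+2*m).factorial : ℝ)
        / (m.factorial * (μ+m).factorial * (ν+m).factorial * (μ+ν+m).factorial) := by
  have key : ∀ k ∈ Finset.range (m+1),
      (1:ℝ)/(k.factorial * (μ+k).factorial * (m-k).factorial * (ν+(m-k)).factorial)
      = ((m.choose k * (μ+ν+m).choose (μ+k) : ℕ) : ℝ)
        / (m.factorial * (μ+ν+m).factorial) := by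
    intro k hk
    have hk' : k ≤ m := by simp at hk; omega
    have h1 : (m.choose k : ℝ) = m.factorial / (k.factorial * (m-k).factorial) :=
      Nat.cast_choose ℝ hk'
    have hle : μ + k ≤ μ + ν + m := by omega
    have h2 : ((μ+ν+m).choose (μ+k) : ℝ)
        = (μ+ν+m).factorial / ((μ+k).factorial * ((ν+(m-k)).factorial)) := by
      have harg : μ+ν+m - (μ+k) = ν + (m-k) := by omega
      rw [Nat.cast_choose ℝ hle, harg]
    push_cast
    rw [h1, h2]
    field_simp
  rw [Finset.sum_congr rfl key, ← Finset.sum_div, ← Nat.cast_sum, vand m ((μ+ν+m)) μ]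
  have h3 : m + (μ+ν+m) = μ+ν+2*m := by ring
  have h4 : μ + m ≤ μ+ν+2*m := by omega
  rw [h3, Nat.cast_choose ℝ h4]
  have h5 : μ+ν+2*m - (μ+m) = ν+m := by omega
  rw [h5, div_div]
  congr 1
  ring

private lemma g_eq (n m : ℕ) :
    ∑ k ∈ Finset.range (m+1),
      (((n+1+2*k : ℕ) : ℝ)
          / (k.factorial * (n+1+k).factorial * (m-k).factorial * (n+(m-k)).factorial)
        - ((n+2*k : ℕ) : ℝ)
          / (k.factorial * (n+k).factorial * (m-k).factorial * (n+1+(m-k)).factorial))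
    = (2*(n:ℝ)+1) * ((2*n+2*m).factorial : ℝ)
        / (m.factorial * ((n+1+m).factorial) * ((n+m).factorial) * ((2*n+1+m).factorial)) := by
  have split : ∀ k ∈ Finset.range (m+1),
      (((n+1+2*k : ℕ) : ℝ)
          / (k.factorial * (n+1+k).factorial * (m-k).factorial * (n+(m-k)).factorial)
        - ((n+2*k : ℕ) : ℝ)
          / (k.factorial * (n+k).factorial * (m-k).factorial * (n+1+(m-k)).factorial))
      = ((n:ℝ)+1) * (1/(k.factorial * (n+1+k).factorial * (m-k).factorial * (n+(m-k)).factorial))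
        + (2*(k:ℝ)) * (1/(k.factorial * (n+1+k).factorial * (m-k).factorial * (n+(m-k)).factorial))
        - ((n:ℝ) * (1/(k.factorial * (n+k).factorial * (m-k).factorial * (n+1+(m-k)).factorial))
        + (2*(k:ℝ)) * (1/(k.factorial * (n+k).factorial * (m-k).factorial * (n+1+(m-k)).factorial))) := by
    intro k _
    push_cast
    ring
  rw [Finset.sum_congr rfl split, Finset.sum_sub_distrib, Finset.sum_add_distrib,
    Finset.sum_add_distrib, ← Finset.mul_sum, ← Finset.mul_sum, sumS (n+1) n m, sumS n (n+1) m]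
  rcases m with _ | s
  · norm_num
    rw [show (2*n+1) = (2*n)+1 from rfl, Nat.factorial_succ (2*n),
      show (n+1) = n+1 from rfl, Nat.factorial_succ n]
    push_cast
    field_simp
    ring
  · -- the two `2k` sums
    have h1 : ∑ k ∈ Finset.range (s+1+1), (2*(k:ℝ))
        * (1/(k.factorial * (n+1+k).factorial * (s+1-k).factorial * (n+(s+1-k)).factorial))
        = 2 * (((n+2)+n+2*s).factorial
          / (s.factorial * ((n+2)+s).factorial * (n+s).factorial * ((n+2)+n+s).factorial)) := by
      rw [Finset.sum_range_succ', ← sumS (n+2) n s, Finset.mul_sum]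
      norm_num
      apply Finset.sum_congr rfl
      intro i hi
      have hi' : i ≤ s := by simp at hi; omega
      have e1 : n+1+(i+1) = n+2+i := by ring
      have e2 : s+1-(i+1) = s-i := by omega
      rw [e1, e2, Nat.factorial_succ i]
      have e3 : n + (s - i) = n + (s-i) := rfl
      push_cast
      field_simp
    have h2 : ∑ k ∈ Finset.range (s+1+1), (2*(k:ℝ))
        * (1/(k.factorial * (n+k).factorial * (s+1-k).factorial * (n+1+(s+1-k)).factorial))
        = 2 * (((n+1)+(n+1)+2*s).factorial
          / (s.factorial * ((n+1)+s).factorial * ((n+1)+s).factorial * ((n+1)+(n+1)+s).factorial)) := by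
      rw [Finset.sum_range_succ', ← sumS (n+1) (n+1) s, Finset.mul_sum]
      norm_num
      apply Finset.sum_congr rfl
      intro i hi
      have hi' : i ≤ s := by simp at hi; omega
      have e1 : n+(i+1) = n+1+i := by ring
      have e2 : s+1-(i+1) = s-i := by omega
      rw [e1, e2, Nat.factorial_succ i]
      push_cast
      field_simp
    rw [h1, h2]
    -- now pure factorial algebra
    have a1 : (n+1)+n+2*(s+1) = (2*n+2*s+2)+1 := by ring
    have a2 : n+(n+1)+2*(s+1) = (2*n+2*s+2)+1 := by ring
    have a3 : (n+2)+n+2*s = 2*n+2*s+2 := by ring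
    have a4 : (n+1)+(n+1)+2*s = 2*n+2*s+2 := by ring
    have a5 : 2*n+2*(s+1) = 2*n+2*s+2 := by ring
    have b1 : (n+1)+(s+1) = (n+s+1)+1 := by ring
    have b2 : n+(s+1) = (n+s)+1 := by ring
    have b3 : (n+2)+s = (n+s+1)+1 := by ring
    have b4 : (n+1)+s = (n+s)+1 := by ring
    have c1 : (n+1)+n+(s+1) = 2*n+s+2 := by ring
    have c2 : n+(n+1)+(s+1) = 2*n+s+2 := by ring
    have c3 : (n+2)+n+s = 2*n+s+2 := by ring
    have c4 : (n+1)+(n+1)+s = 2*n+s+2 := by ring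
    have c5 : 2*n+1+(s+1) = 2*n+s+2 := by ring
    rw [a1, a2, a3, a4, a5, b1, b2, b3, b4, c1, c2, c3, c4, c5,
      Nat.factorial_succ (2*n+2*s+2), Nat.factorial_succ (n+s+1), Nat.factorial_succ (n+s),
      Nat.factorial_succ s]
    push_cast
    field_simp
    ring


private lemma fact_pos (m : ℕ) : (0:ℝ) < m.factorial := by
  exact_mod_cast m.factorial_pos

private lemma one_le_fact (m : ℕ) : (1:ℝ) ≤ m.factorial := by
  exact_mod_cast m.factorial_pos

private lemma summable_qpow (n : ℕ) (q : ℝ) :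
    Summable (fun k : ℕ => q ^ (n + 2*k) / (k.factorial : ℝ)) := by
  apply ((Real.summable_pow_div_factorial (q^2)).mul_left (q^n)).congr
  intro k
  rw [pow_add, pow_mul]
  ring

private lemma numer_bound (n k : ℕ) (x q : ℝ) (hq : 1 ≤ q) (hx : |x| ≤ q) (m : ℕ)
    (hm : m ≤ n + 2*k) :
    ((n+2*k : ℕ):ℝ) * |x/2|^m * (1/2) ≤ (2*q)^(n+2*k) := by
  have hq0 : 0 < q := lt_of_lt_of_le one_pos hq
  have hx2 : |x/2| ≤ q := by
    rw [abs_div, abs_two]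
    nlinarith [abs_nonneg x]
  have h2 : ((n+2*k : ℕ):ℝ) ≤ 2^(n+2*k) := by
    exact_mod_cast (Nat.lt_two_pow_self (n := n+2*k)).le
  have hmid : |x/2|^m ≤ q^(n+2*k) := by
    calc |x/2|^m ≤ q^m := pow_le_pow_left₀ (abs_nonneg _) hx2 _
    _ ≤ q^(n+2*k) := pow_le_pow_right₀ hq hm
  calc ((n+2*k : ℕ):ℝ) * |x/2|^m * (1/2)
      ≤ (2^(n+2*k) * q^(n+2*k)) * (1/2) := by
        apply mul_le_mul_of_nonneg_right _ (by norm_num)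
        exact mul_le_mul h2 hmid (by positivity) (by positivity)
    _ ≤ (2*q)^(n+2*k) := by
        rw [mul_pow]
        nlinarith [pow_nonneg (le_of_lt hq0) (n+2*k), pow_pos (two_pos (α := ℝ)) (n+2*k),
          mul_pos (pow_pos (two_pos (α := ℝ)) (n+2*k)) (pow_pos hq0 (n+2*k))]

private lemma deriv_term_bound (n k : ℕ) (x q : ℝ) (hq : 1 ≤ q) (hx : |x| ≤ q) :
    ‖(((n+2*k : ℕ):ℝ) * (x/2)^(n+2*k-1) * (1/2)) / ((k.factorial : ℝ) * (n+k).factorial)‖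
      ≤ (2*q)^(n+2*k) / k.factorial := by
  have hd : |((k.factorial : ℝ) * (n+k).factorial)| = (k.factorial : ℝ) * (n+k).factorial :=
    abs_of_pos (by positivity)
  rw [Real.norm_eq_abs, abs_div, hd, abs_mul, abs_mul, abs_pow, Nat.abs_cast]
  have h12 : |(1:ℝ)/2| = 1/2 := by norm_num
  rw [h12]
  apply div_le_div₀ (by positivity) (numer_bound n k x q hq hx _ (by omega)) (fact_pos k)
  · nlinarith [fact_pos k, fact_pos (n+k), one_le_fact (n+k)]
private lemma term_bound (n k : ℕ) (x q : ℝ) (hq : 1 ≤ q) (hx : |x| ≤ q) :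
    ‖(x/2)^(n+2*k) / ((k.factorial : ℝ) * (n+k).factorial)‖
      ≤ (2*q)^(n+2*k) / k.factorial := by
  have hd : |((k.factorial : ℝ) * (n+k).factorial)| = (k.factorial : ℝ) * (n+k).factorial :=
    abs_of_pos (by positivity)
  rw [Real.norm_eq_abs, abs_div, hd, abs_pow]
  have hq0 : 0 < q := lt_of_lt_of_le one_pos hq
  have hx2 : |x/2| ≤ q := by
    rw [abs_div, abs_two]
    nlinarith [abs_nonneg x]
  have hnum : |x/2|^(n+2*k) ≤ (2*q)^(n+2*k) := by
    apply pow_le_pow_left₀ (abs_nonneg _)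
    nlinarith
  apply div_le_div₀ (by positivity) hnum (fact_pos k)
  nlinarith [fact_pos k, fact_pos (n+k), one_le_fact (n+k)]

private lemma mul_term_bound (n k : ℕ) (x q : ℝ) (hq : 1 ≤ q) (hx : |x| ≤ q) :
    ‖((n+2*k : ℕ):ℝ) * ((x/2)^(n+2*k) / ((k.factorial : ℝ) * (n+k).factorial))‖
      ≤ 2 * ((2*q)^(n+2*k) / k.factorial) := by
  have hd : |((k.factorial : ℝ) * (n+k).factorial)| = (k.factorial : ℝ) * (n+k).factorial :=
    abs_of_pos (by positivity)
  rw [Real.norm_eq_abs, abs_mul, abs_div, hd, abs_pow, Nat.abs_cast]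
  have key := numer_bound n k x q hq hx (n+2*k) le_rfl
  calc ((n+2*k : ℕ):ℝ) * (|x/2|^(n+2*k) / ((k.factorial : ℝ) * (n+k).factorial))
      = (((n+2*k : ℕ):ℝ) * |x/2|^(n+2*k)) / ((k.factorial : ℝ) * (n+k).factorial) := by ring
    _ ≤ (2*(2*q)^(n+2*k)) / (k.factorial : ℝ) := by
        apply div_le_div₀ (by positivity) (by nlinarith) (fact_pos k)
        nlinarith [fact_pos k, fact_pos (n+k), one_le_fact (n+k)]
    _ = 2 * ((2*q)^(n+2*k) / k.factorial) := by ring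

private lemma summable_term (n : ℕ) (x : ℝ) :
    Summable (fun k : ℕ => (x/2)^(n+2*k) / ((k.factorial : ℝ) * (n+k).factorial)) := by
  have hq : (1:ℝ) ≤ 1 + |x| := by simp [abs_nonneg]
  apply Summable.of_norm
  apply Summable.of_nonneg_of_le (fun k => norm_nonneg _)
    (fun k => term_bound n k x (1+|x|) hq (by linarith [abs_nonneg x]))
  exact summable_qpow n (2*(1+|x|))

private lemma summable_mul_term (n : ℕ) (x : ℝ) :
    Summable (fun k : ℕ =>
      ((n+2*k : ℕ):ℝ) * ((x/2)^(n+2*k) / ((k.factorial : ℝ) * (n+k).factorial))) := by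
  have hq : (1:ℝ) ≤ 1 + |x| := by simp [abs_nonneg]
  apply Summable.of_norm
  apply Summable.of_nonneg_of_le (fun k => norm_nonneg _)
    (fun k => mul_term_bound n k x (1+|x|) hq (by linarith [abs_nonneg x]))
  exact (summable_qpow n (2*(1+|x|))).mul_left 2

private lemma term_hasDerivAt (n k : ℕ) (x : ℝ) :
    HasDerivAt (fun y : ℝ => (y/2)^(n+2*k) / ((k.factorial : ℝ) * (n+k).factorial))
      ((((n+2*k : ℕ):ℝ) * (x/2)^(n+2*k-1) * (1/2)) / ((k.factorial : ℝ) * (n+k).factorial)) x := by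
  have h : HasDerivAt (fun y : ℝ => y/2) (1/2) x := (hasDerivAt_id x).div_const 2
  exact (h.pow (n+2*k)).div_const _

private lemma besselI_hasDerivAt (n : ℕ) (r : ℝ) :
    HasDerivAt (besselI n)
      (∑' k : ℕ, (((n+2*k : ℕ):ℝ) * (r/2)^(n+2*k-1) * (1/2))
        / ((k.factorial : ℝ) * (n+k).factorial)) r := by
  set q : ℝ := |r| + 2 with hqdef
  have hq : 1 ≤ q := by have := abs_nonneg r; simp [hqdef]; linarith
  have hmem : r ∈ Metric.ball (0:ℝ) (|r|+1) := by
    simp [Real.norm_eq_abs]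
  apply hasDerivAt_of_tendstoUniformlyOn Metric.isOpen_ball
    (tendstoUniformlyOn_tsum (summable_qpow n (2*q))
      (fun k x hx => deriv_term_bound n k x q hq (by
        have : |x| < |r| + 1 := by simpa [Real.norm_eq_abs] using hx
        linarith)))
    (Eventually.of_forall fun t x _ => HasDerivAt.fun_sum fun k _ => term_hasDerivAt n k x)
    (fun x _ => (summable_term n x).hasSum) hmem

private lemma besselI_deriv (n : ℕ) (r : ℝ) (hr : r ≠ 0) :
    deriv (besselI n) r
      = ∑' k : ℕ, ((n+2*k : ℕ):ℝ)
          * ((r/2)^(n+2*k) / ((k.factorial : ℝ) * (n+k).factorial)) / r := by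
  rw [(besselI_hasDerivAt n r).deriv]
  apply tsum_congr
  intro k
  rcases Nat.eq_zero_or_pos (n+2*k) with h | h
  · simp [h]
  · have hp : (r/2)^(n+2*k) = (r/2)^(n+2*k-1) * (r/2) := by
      rw [← pow_succ]
      congr 1
      omega
    have d1 : (k.factorial:ℝ) ≠ 0 := (fact_pos k).ne'
    have d2 : ((n+k).factorial:ℝ) ≠ 0 := (fact_pos (n+k)).ne'
    rw [hp]
    field_simp

private lemma besselI_pos (n : ℕ) (r : ℝ) (hr : 0 < r) : 0 < besselI n r := by
  unfold besselI
  apply Summable.tsum_pos (summable_term n r) (fun k => by positivity) 0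
  have := fact_pos 0
  have := fact_pos n
  positivity

private lemma row_eq (n m : ℕ) (r : ℝ) (hr : 0 < r) :
    (∑ kl ∈ Finset.HasAntidiagonal.antidiagonal m,
        (((n+1)+2*kl.1 : ℕ):ℝ) * ((r/2)^((n+1)+2*kl.1)
            / ((kl.1.factorial : ℝ) * ((n+1)+kl.1).factorial)) / r
          * ((r/2)^(n+2*kl.2) / ((kl.2.factorial : ℝ) * (n+kl.2).factorial)))
      - (∑ kl ∈ Finset.HasAntidiagonal.antidiagonal m,
        ((n+2*kl.1 : ℕ):ℝ) * ((r/2)^(n+2*kl.1)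
            / ((kl.1.factorial : ℝ) * (n+kl.1).factorial)) / r
          * ((r/2)^((n+1)+2*kl.2) / ((kl.2.factorial : ℝ) * ((n+1)+kl.2).factorial)))
    = (r/2)^(2*n+1+2*m)/r * ((2*(n:ℝ)+1) * ((2*n+2*m).factorial : ℝ)
        / (m.factorial * ((n+1+m).factorial) * ((n+m).factorial) * ((2*n+1+m).factorial))) := by
  rw [← Finset.sum_sub_distrib, Finset.Nat.sum_antidiagonal_eq_sum_range_succ_mk,
    ← g_eq n m, Finset.mul_sum]
  apply Finset.sum_congr rfl
  intro k hk
  have hk' : k ≤ m := by simp at hk; omega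
  have p1 : (r/2)^((n+1)+2*k) * (r/2)^(n+2*(m-k)) = (r/2)^(2*n+1+2*m) := by
    rw [← pow_add]; congr 1; omega
  have p2 : (r/2)^(n+2*k) * (r/2)^((n+1)+2*(m-k)) = (r/2)^(2*n+1+2*m) := by
    rw [← pow_add]; congr 1; omega
  have e1 : ((n+1)+2*k : ℕ) = (n+1+2*k : ℕ) := by ring
  rw [e1]
  rw [mul_sub]
  congr 1
  · rw [← p1]; ring
  · rw [← p2]; ring

theorem besselI_logDeriv_strict_mono (n : ℕ) (r : ℝ) (hr : 0 < r) :
    deriv (besselI (n + 1)) r / besselI (n + 1) r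
      > deriv (besselI n) r / besselI n r := by
  have hr' : r ≠ 0 := hr.ne'
  rw [gt_iff_lt, div_lt_div_iff₀ (besselI_pos n r hr) (besselI_pos (n+1) r hr)]
  rw [← sub_pos, besselI_deriv n r hr', besselI_deriv (n+1) r hr']
  unfold besselI
  -- summability data
  have hA := summable_term n r
  have hB := summable_term (n+1) r
  have hA' := (summable_mul_term n r).div_const r
  have hB' := (summable_mul_term (n+1) r).div_const r
  have hAn : Summable (fun k : ℕ =>
      ‖(r/2)^(n+2*k) / ((k.factorial : ℝ) * (n+k).factorial)‖) :=
    hA.congr fun k => (Real.norm_of_nonneg (by positivity)).symm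
  have hBn : Summable (fun k : ℕ =>
      ‖(r/2)^((n+1)+2*k) / ((k.factorial : ℝ) * ((n+1)+k).factorial)‖) :=
    hB.congr fun k => (Real.norm_of_nonneg (by positivity)).symm
  have hA'n : Summable (fun k : ℕ =>
      ‖((n+2*k : ℕ):ℝ) * ((r/2)^(n+2*k) / ((k.factorial : ℝ) * (n+k).factorial)) / r‖) :=
    hA'.congr fun k => (Real.norm_of_nonneg (by positivity)).symm
  have hB'n : Summable (fun k : ℕ =>
      ‖(((n+1)+2*k : ℕ):ℝ) * ((r/2)^((n+1)+2*k)
          / ((k.factorial : ℝ) * ((n+1)+k).factorial)) / r‖) :=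
    hB'.congr fun k => (Real.norm_of_nonneg (by positivity)).symm
  rw [tsum_mul_tsum_eq_tsum_sum_antidiagonal_of_summable_norm hB'n hAn,
    tsum_mul_tsum_eq_tsum_sum_antidiagonal_of_summable_norm hA'n hBn]
  have hs1 := (summable_norm_sum_mul_antidiagonal_of_summable_norm hB'n hAn).of_norm
  have hs2 := (summable_norm_sum_mul_antidiagonal_of_summable_norm hA'n hBn).of_norm
  rw [← Summable.tsum_sub hs1 hs2]
  have hpos : ∀ m : ℕ, 0 < (r/2)^(2*n+1+2*m)/r * ((2*(n:ℝ)+1) * ((2*n+2*m).factorial : ℝ)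
      / (m.factorial * ((n+1+m).factorial) * ((n+m).factorial) * ((2*n+1+m).factorial))) := by
    intro m
    have f1 := fact_pos m
    have f2 := fact_pos (n+1+m)
    have f3 := fact_pos (n+m)
    have f4 := fact_pos (2*n+1+m)
    have f5 := fact_pos (2*n+2*m)
    positivity
  apply Summable.tsum_pos (hs1.sub hs2) ?_ 0 ?_
  · intro m
    exact ((row_eq n m r hr).symm ▸ hpos m).le
  · exact (row_eq n 0 r hr).symm ▸ hpos 0
end

section
/- For all r > 0, I₀(r) I₂(r) < I₁(r)², where I_n denotes the modified Bessel function of the first kind of order n. -/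
open Finset

lemma vdm1 (m : ℕ) : ∑ k ∈ range (m+1), m.choose k * (m+2).choose k = (2*m+2).choose m := by
  have h := Nat.add_choose_eq m (m+2) m
  rw [Finset.Nat.sum_antidiagonal_eq_sum_range_succ_mk] at h
  rw [show 2*m+2 = m + (m+2) by ring, h, ← Finset.sum_range_reflect]
  refine Finset.sum_congr rfl fun k hk => ?_
  have hk' : k ≤ m := by simpa [Nat.lt_succ_iff] using hk
  simp only [Nat.add_sub_cancel]
  rw [Nat.choose_symm hk']

lemma vdm2 (m : ℕ) : ∑ k ∈ range (m+1), m.choose k * (m+2).choose (k+1) = (2*m+2).choose (m+1) := by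
  have h := Nat.add_choose_eq m (m+2) (m+1)
  rw [Finset.Nat.sum_antidiagonal_eq_sum_range_succ_mk] at h
  simp only at h
  rw [Finset.sum_range_succ, Nat.choose_eq_zero_of_lt (Nat.lt_succ_self m), zero_mul,
    add_zero] at h
  rw [show 2*m+2 = m + (m+2) by ring, h, ← Finset.sum_range_reflect]
  refine Finset.sum_congr rfl fun k hk => ?_
  have hk' : k ≤ m := by simpa [Nat.lt_succ_iff] using hk
  simp only [Nat.add_sub_cancel]
  rw [Nat.choose_symm hk']
  congr 2
  omega

lemma choose_lt (m : ℕ) : (2*m+2).choose m < (2*m+2).choose (m+1) := by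
  have h := Nat.choose_succ_right_eq (2*m+2) m
  have h2 : 2*m+2 - m = m + 2 := by omega
  rw [h2] at h
  have hpos : 0 < (2*m+2).choose m := Nat.choose_pos (by omega)
  by_contra hle
  push_neg at hle
  nlinarith [hle, hpos, h]

lemma factR_pos (n : ℕ) : (0:ℝ) < (n.factorial : ℝ) := by
  exact_mod_cast n.factorial_pos

lemma keyterm (x : ℝ) (m k n1 n2 : ℕ) (hk : k ≤ m) (h12 : n1 + n2 = 2)
    (hn1 : k + n1 ≤ m + 2) :
    (x ^ (n1 + 2*k) / ((Nat.factorial k : ℝ) * (Nat.factorial (n1 + k) : ℝ))) *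
      (x ^ (n2 + 2*(m-k)) / ((Nat.factorial (m-k) : ℝ) * (Nat.factorial (n2 + (m-k)) : ℝ)))
    = x ^ (2*m+2) *
      ((m.choose k * (m+2).choose (k + n1) : ℕ) / ((Nat.factorial m : ℝ) * (Nat.factorial (m+2) : ℝ))) := by
  set l := m - k with hl
  have hlk : k + l = m := by omega
  have hA : ((m.choose k : ℝ)) * (Nat.factorial k) * (Nat.factorial l) = Nat.factorial m := by
    exact_mod_cast congrArg (Nat.cast (R := ℝ))
      (by rw [hl]; exact Nat.choose_mul_factorial_mul_factorial hk)
  have hB : (((m+2).choose (k+n1) : ℝ)) * (Nat.factorial (n1 + k)) * (Nat.factorial (n2 + l))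
      = Nat.factorial (m+2) := by
    have h1 : (m+2) - (k+n1) = n2 + l := by omega
    have := Nat.choose_mul_factorial_mul_factorial hn1
    rw [h1] at this
    rw [Nat.add_comm n1 k]
    exact_mod_cast congrArg (Nat.cast (R := ℝ)) this
  have hfk := factR_pos k
  have hfl := factR_pos l
  have hf1 := factR_pos (n1 + k)
  have hf2 := factR_pos (n2 + l)
  have hfm := factR_pos m
  have hfm2 := factR_pos (m+2)
  rw [div_mul_div_comm, ← pow_add, show n1 + 2*k + (n2 + 2*l) = 2*m+2 by omega]
  rw [mul_div_assoc', div_eq_div_iff (by positivity) (by positivity)]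
  push_cast
  rw [← hA, ← hB]
  ring

lemma sum_eval (x : ℝ) (m n1 n2 : ℕ) (h12 : n1 + n2 = 2) :
    ∑ p ∈ Finset.HasAntidiagonal.antidiagonal m,
      (x ^ (n1 + 2*p.1) / ((Nat.factorial p.1 : ℝ) * (Nat.factorial (n1 + p.1) : ℝ))) *
      (x ^ (n2 + 2*p.2) / ((Nat.factorial p.2 : ℝ) * (Nat.factorial (n2 + p.2) : ℝ)))
    = x ^ (2*m+2) *
      ((∑ k ∈ range (m+1), m.choose k * (m+2).choose (k + n1) : ℕ)
        / ((Nat.factorial m : ℝ) * (Nat.factorial (m+2) : ℝ))) := by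
  rw [Finset.Nat.sum_antidiagonal_eq_sum_range_succ_mk]
  push_cast
  rw [Finset.sum_div, Finset.mul_sum]
  refine Finset.sum_congr rfl fun k hk => ?_
  have hk' : k ≤ m := by simpa [Nat.lt_succ_iff] using hk
  have := keyterm x m k n1 n2 hk' h12 (by omega)
  push_cast at this
  simpa [mul_div_assoc] using this

noncomputable def fB (x : ℝ) (n k : ℕ) : ℝ :=
  x ^ (n + 2 * k) / ((Nat.factorial k : ℝ) * (Nat.factorial (n + k) : ℝ))

lemma fB_nonneg {x : ℝ} (hx : 0 < x) (n k : ℕ) : 0 ≤ fB x n k := by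
  unfold fB; positivity

lemma fB_summable_norm {x : ℝ} (hx : 0 < x) (n : ℕ) : Summable fun k => ‖fB x n k‖ := by
  have h : Summable fun k : ℕ => x ^ n * ((x ^ 2) ^ k / (Nat.factorial k : ℝ)) :=
    (Real.summable_pow_div_factorial (x ^ 2)).mul_left _
  refine h.of_nonneg_of_le (fun k => norm_nonneg _) (fun k => ?_)
  rw [Real.norm_of_nonneg (fB_nonneg hx n k)]
  have he : x ^ n * ((x ^ 2) ^ k / (Nat.factorial k : ℝ))
      = x ^ (n + 2 * k) / (Nat.factorial k : ℝ) := by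
    rw [← pow_mul, mul_div_assoc', ← pow_add]
  rw [he]
  unfold fB
  apply div_le_div_of_nonneg_left (by positivity) (factR_pos k)
  have h1 : (1:ℝ) ≤ (Nat.factorial (n+k) : ℝ) := by
    exact_mod_cast Nat.one_le_iff_ne_zero.2 (Nat.factorial_ne_zero _)
  nlinarith [factR_pos k]

lemma key_lt {x : ℝ} (hx : 0 < x) (m : ℕ) :
    ∑ p ∈ Finset.HasAntidiagonal.antidiagonal m, fB x 0 p.1 * fB x 2 p.2
      < ∑ p ∈ Finset.HasAntidiagonal.antidiagonal m, fB x 1 p.1 * fB x 1 p.2 := by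
  have e1 := sum_eval x m 0 2 rfl
  have e2 := sum_eval x m 1 1 rfl
  unfold fB
  rw [e1, e2]
  have h1 : ∑ k ∈ range (m+1), m.choose k * (m+2).choose (k+0) = (2*m+2).choose m := by
    simpa using vdm1 m
  have h2 : ∑ k ∈ range (m+1), m.choose k * (m+2).choose (k+1) = (2*m+2).choose (m+1) :=
    vdm2 m
  have hlt : ∑ k ∈ range (m+1), m.choose k * (m+2).choose (k+0)
      < ∑ k ∈ range (m+1), m.choose k * (m+2).choose (k+1) := by
    rw [h1, h2]; exact choose_lt m
  have hM : (0:ℝ) < (Nat.factorial m : ℝ) * (Nat.factorial (m+2) : ℝ) := by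
    have := factR_pos m; have := factR_pos (m+2); positivity
  exact mul_lt_mul_of_pos_left ((div_lt_div_iff_of_pos_right hM).mpr (by exact_mod_cast hlt))
    (pow_pos hx _)

theorem besselI_turan (r : ℝ) (hr : 0 < r) :
    besselI 0 r * besselI 2 r < (besselI 1 r) ^ 2 := by
  have hx : 0 < r / 2 := by positivity
  have hb : ∀ n, besselI n r = ∑' k, fB (r/2) n k := fun n => rfl
  have hc : ∀ n1 n2 : ℕ, (∑' k, fB (r/2) n1 k) * (∑' k, fB (r/2) n2 k)
      = ∑' m, ∑ p ∈ Finset.HasAntidiagonal.antidiagonal m, fB (r/2) n1 p.1 * fB (r/2) n2 p.2 := fun n1 n2 =>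
    tsum_mul_tsum_eq_tsum_sum_antidiagonal_of_summable_norm
      (fB_summable_norm hx n1) (fB_summable_norm hx n2)
  rw [hb, hb, hb, sq, hc 0 2, hc 1 1]
  refine Summable.tsum_lt_tsum_of_nonneg
    (fun m => Finset.sum_nonneg fun p _ => mul_nonneg (fB_nonneg hx _ _) (fB_nonneg hx _ _))
    (fun m => (key_lt hx m).le) (key_lt hx 0) ?_
  exact (summable_norm_sum_mul_antidiagonal_of_summable_norm
    (fB_summable_norm hx 1) (fB_summable_norm hx 1)).of_norm
end

section
/- Let R_S > 0 and define μ₀ = (1/R_S)·[−1 + 1/(R_S·I₂(R_S)/I₁(R_S) − R_S·I₁(R_S)/I₀(R_S) + 1)]. Then μ₀ > 0. -/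
open scoped Nat
open Finset

namespace BesselAux

noncomputable def b0 (y : ℝ) (k : ℕ) : ℝ := y ^ (2 * k) / ((k ! : ℝ) * (k ! : ℝ))
noncomputable def b1 (y : ℝ) (k : ℕ) : ℝ := y ^ (2 * k + 1) / ((k ! : ℝ) * ((k + 1)! : ℝ))

lemma fact_pos (k : ℕ) : (0:ℝ) < (k ! : ℝ) := by exact_mod_cast k.factorial_pos

lemma b0_nonneg {y : ℝ} (hy : 0 ≤ y) (k : ℕ) : 0 ≤ b0 y k := by
  unfold b0; positivity

lemma b1_nonneg {y : ℝ} (hy : 0 ≤ y) (k : ℕ) : 0 ≤ b1 y k := by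
  unfold b1; positivity

lemma summable_b0 {y : ℝ} (hy : 0 ≤ y) : Summable (b0 y) := by
  have hsum : Summable (fun k => (y ^ 2) ^ k / (k ! : ℝ)) :=
    Real.summable_pow_div_factorial (y ^ 2)
  refine Summable.of_nonneg_of_le (b0_nonneg hy) (fun k => ?_) hsum
  unfold b0
  rw [← pow_mul]
  gcongr
  all_goals first
    | positivity
    | exact_mod_cast Nat.le_mul_of_pos_left _ k.factorial_pos

lemma summable_b1 {y : ℝ} (hy : 0 ≤ y) : Summable (b1 y) := by
  have hsum : Summable (fun k => y * ((y ^ 2) ^ k / (k ! : ℝ))) :=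
    (Real.summable_pow_div_factorial (y ^ 2)).mul_left y
  refine Summable.of_nonneg_of_le (b1_nonneg hy) (fun k => ?_) hsum
  unfold b1
  rw [pow_succ, ← pow_mul, mul_comm (y ^ (2 * k)) y, mul_div_assoc]
  gcongr
  all_goals first
    | positivity
    | exact_mod_cast Nat.le_mul_of_pos_right _ (k + 1).factorial_pos

lemma norm_b0 {y : ℝ} (hy : 0 ≤ y) : (fun k => ‖b0 y k‖) = b0 y :=
  funext fun k => Real.norm_of_nonneg (b0_nonneg hy k)

lemma norm_b1 {y : ℝ} (hy : 0 ≤ y) : (fun k => ‖b1 y k‖) = b1 y :=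
  funext fun k => Real.norm_of_nonneg (b1_nonneg hy k)

lemma besselI_zero (r : ℝ) : besselI 0 r = ∑' k, b0 (r / 2) k := by
  unfold besselI b0
  congr 1
  funext k
  norm_num

lemma besselI_one (r : ℝ) : besselI 1 r = ∑' k, b1 (r / 2) k := by
  unfold besselI b1
  congr 1
  funext k
  rw [add_comm 1 (2 * k), add_comm 1 k]

lemma inv_fact_eq {k m : ℕ} (hk : k ≤ m) :
    (1 : ℝ) / ((k ! : ℝ) * ((m - k)! : ℝ)) = (m.choose k : ℝ) / (m ! : ℝ) := by
  have h := Nat.choose_mul_factorial_mul_factorial hk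
  have h' : (m.choose k : ℝ) * (k ! : ℝ) * ((m - k)! : ℝ) = (m ! : ℝ) := by
    exact_mod_cast h
  rw [div_eq_div_iff (by positivity) (fact_pos m).ne', one_mul, ← h']
  ring

end BesselAux

namespace BesselAux

lemma fact_succ_real (k : ℕ) : ((k + 1)! : ℝ) = (k + 1) * (k ! : ℝ) := by
  push_cast [Nat.factorial_succ]; ring

noncomputable def bt (y : ℝ) (k : ℕ) : ℝ := y ^ (2 * k) * k / ((k ! : ℝ) * ((k + 1)! : ℝ))

lemma bt_nonneg {y : ℝ} (hy : 0 ≤ y) (k : ℕ) : 0 ≤ bt y k := by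
  unfold bt; positivity

lemma bt_zero (y : ℝ) : bt y 0 = 0 := by simp [bt]

lemma bt_succ (y : ℝ) (k : ℕ) :
    y ^ (2 + 2 * k) / ((k ! : ℝ) * ((2 + k)! : ℝ)) = bt y (k + 1) := by
  unfold bt
  have e2 : ((k + 1)! : ℝ) = (k + 1) * (k ! : ℝ) := fact_succ_real k
  have e4 : ((k + 1 + 1)! : ℝ) = (k + 2) * ((k + 1) * (k ! : ℝ)) := by
    rw [fact_succ_real, fact_succ_real]; push_cast; ring
  have e3 : ((2 + k)! : ℝ) = (k + 2) * ((k + 1) * (k ! : ℝ)) := by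
    rw [show 2 + k = k + 1 + 1 from by omega]; exact e4
  rw [e2, e3, e4, show 2 * (k + 1) = 2 + 2 * k from by omega]
  have h1 : (k ! : ℝ) ≠ 0 := (fact_pos k).ne'
  push_cast
  field_simp

lemma summable_bt {y : ℝ} (hy : 0 ≤ y) : Summable (bt y) := by
  have hsum : Summable (fun k => (y ^ 2) ^ k / (k ! : ℝ)) :=
    Real.summable_pow_div_factorial (y ^ 2)
  refine Summable.of_nonneg_of_le (bt_nonneg hy) (fun k => ?_) hsum
  unfold bt
  rw [← pow_mul, div_le_div_iff₀ (by positivity) (fact_pos k)]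
  have hk : (k : ℝ) ≤ ((k + 1)! : ℝ) := by
    exact_mod_cast (Nat.le_succ k).trans (Nat.self_le_factorial (k + 1))
  calc y ^ (2 * k) * (k : ℝ) * (k ! : ℝ)
      ≤ y ^ (2 * k) * ((k + 1)! : ℝ) * (k ! : ℝ) := by
        have h0 : (0:ℝ) ≤ y ^ (2 * k) := by positivity
        have := mul_le_mul_of_nonneg_left hk h0
        exact mul_le_mul_of_nonneg_right this (fact_pos k).le
    _ = y ^ (2 * k) * ((k ! : ℝ) * ((k + 1)! : ℝ)) := by ring

lemma pointwise_zero {y : ℝ} (hy : y ≠ 0) (k : ℕ) :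
    b0 y k - 1 / y * b1 y k - bt y k = 0 := by
  unfold b0 b1 bt
  rw [fact_succ_real]
  have h1 : (k ! : ℝ) ≠ 0 := (fact_pos k).ne'
  have h2 : (k : ℝ) + 1 ≠ 0 := by positivity
  field_simp
  ring

lemma besselI_two {r : ℝ} (hr : 0 < r) :
    besselI 2 r = besselI 0 r - 2 / r * besselI 1 r := by
  have hy : 0 < r / 2 := by positivity
  have hst : Summable (bt (r / 2)) := summable_bt hy.le
  have hst1 : Summable (fun k => bt (r / 2) (k + 1)) := (summable_nat_add_iff 1).mpr hst
  have hI2 : besselI 2 r = ∑' k, bt (r / 2) k := by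
    have h : besselI 2 r = ∑' k, bt (r / 2) (k + 1) := by
      unfold besselI
      exact tsum_congr (fun k => bt_succ (r / 2) k)
    rw [h, tsum_eq_zero_add' hst1, bt_zero, zero_add]
  have hs0 := summable_b0 hy.le
  have hs1 := summable_b1 hy.le
  have h2r : 2 / r = 1 / (r / 2) := by
    field_simp
  have hzero : ∀ k, b0 (r / 2) k - 2 / r * b1 (r / 2) k - bt (r / 2) k = 0 := by
    intro k
    rw [h2r]
    exact pointwise_zero hy.ne' k
  have key : ∑' k, (b0 (r / 2) k - 2 / r * b1 (r / 2) k - bt (r / 2) k)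
      = besselI 0 r - 2 / r * besselI 1 r - besselI 2 r := by
    rw [Summable.tsum_sub (hs0.sub (hs1.mul_left (2 / r))) hst,
      Summable.tsum_sub hs0 (hs1.mul_left (2 / r)), tsum_mul_left,
      besselI_zero, besselI_one, hI2]
  have h0 : ∑' k, (b0 (r / 2) k - 2 / r * b1 (r / 2) k - bt (r / 2) k) = 0 := by
    rw [tsum_congr hzero]; exact tsum_zero
  rw [h0] at key
  linarith

lemma besselI_zero_pos {r : ℝ} (hr : 0 < r) : 0 < besselI 0 r := by
  have hy : 0 < r / 2 := by positivity
  rw [besselI_zero]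
  refine Summable.tsum_pos (summable_b0 hy.le) (b0_nonneg hy.le) 0 ?_
  simp [b0]

lemma besselI_one_pos {r : ℝ} (hr : 0 < r) : 0 < besselI 1 r := by
  have hy : 0 < r / 2 := by positivity
  rw [besselI_one]
  refine Summable.tsum_pos (summable_b1 hy.le) (b1_nonneg hy.le) 0 ?_
  simpa [b1] using hy

end BesselAux

namespace BesselAux

lemma sum_antidiag_b0 (y : ℝ) (m : ℕ) :
    ∑ kl ∈ antidiagonal m, b0 y kl.1 * b0 y kl.2
      = y ^ (2 * m) * ((2 * m).choose m : ℝ) / ((m ! : ℝ) * (m ! : ℝ)) := by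
  rw [Finset.Nat.sum_antidiagonal_eq_sum_range_succ_mk]
  have step : ∀ k ∈ range (m + 1), b0 y k * b0 y (m - k)
      = (m.choose k : ℝ) * (m.choose (m - k) : ℝ) * y ^ (2 * m) / ((m ! : ℝ) * (m ! : ℝ)) := by
    intro k hk
    have hkm : k ≤ m := Nat.lt_succ_iff.mp (mem_range.mp hk)
    have e : y ^ (2 * k) * y ^ (2 * (m - k)) = y ^ (2 * m) := by
      rw [← pow_add]; congr 1; omega
    calc b0 y k * b0 y (m - k)
        = (y ^ (2 * k) * y ^ (2 * (m - k))) * ((1:ℝ) / ((k ! : ℝ) * ((m - k)! : ℝ)))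
            * ((1:ℝ) / ((k ! : ℝ) * ((m - k)! : ℝ))) := by unfold b0; ring
      _ = (m.choose k : ℝ) * (m.choose (m - k) : ℝ) * y ^ (2 * m)
            / ((m ! : ℝ) * (m ! : ℝ)) := by
          rw [e, inv_fact_eq hkm, Nat.choose_symm hkm]; ring
  rw [Finset.sum_congr rfl step, ← Finset.sum_div, ← Finset.sum_mul]
  have hnat : (m + m).choose m = ∑ k ∈ range (m + 1), m.choose k * m.choose (m - k) := by
    rw [Nat.add_choose_eq, Finset.Nat.sum_antidiagonal_eq_sum_range_succ_mk]
  have hcast : ∑ k ∈ range (m + 1), (m.choose k : ℝ) * (m.choose (m - k) : ℝ)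
      = ((2 * m).choose m : ℝ) := by
    rw [two_mul, hnat]; push_cast; rfl
  rw [hcast]; ring

lemma sum_antidiag_b1 (y : ℝ) (m : ℕ) :
    ∑ kl ∈ antidiagonal m, b1 y kl.1 * b1 y kl.2
      = y ^ (2 * m + 2) * ((2 * m + 2).choose m : ℝ) / (((m + 1)! : ℝ) * ((m + 1)! : ℝ)) := by
  rw [Finset.Nat.sum_antidiagonal_eq_sum_range_succ_mk]
  have step : ∀ k ∈ range (m + 1), b1 y k * b1 y (m - k)
      = ((m + 1).choose k : ℝ) * ((m + 1).choose (m - k) : ℝ) * y ^ (2 * m + 2)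
          / (((m + 1)! : ℝ) * ((m + 1)! : ℝ)) := by
    intro k hk
    have hkm : k ≤ m := Nat.lt_succ_iff.mp (mem_range.mp hk)
    have hk1 : k + 1 ≤ m + 1 := by omega
    have e : y ^ (2 * k + 1) * y ^ (2 * (m - k) + 1) = y ^ (2 * m + 2) := by
      rw [← pow_add]; congr 1; omega
    calc b1 y k * b1 y (m - k)
        = (y ^ (2 * k + 1) * y ^ (2 * (m - k) + 1))
            * ((1:ℝ) / ((k ! : ℝ) * ((m - k + 1)! : ℝ)))
            * ((1:ℝ) / (((k + 1)! : ℝ) * ((m - k)! : ℝ))) := by unfold b1; ring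
      _ = ((m + 1).choose k : ℝ) * ((m + 1).choose (m - k) : ℝ) * y ^ (2 * m + 2)
            / (((m + 1)! : ℝ) * ((m + 1)! : ℝ)) := by
          rw [e, show m - k + 1 = m + 1 - k from by omega,
            inv_fact_eq (show k ≤ m + 1 from by omega),
            show m - k = m + 1 - (k + 1) from by omega,
            inv_fact_eq hk1, Nat.choose_symm hk1]
          ring
  rw [Finset.sum_congr rfl step, ← Finset.sum_div, ← Finset.sum_mul]
  have hnat : ((m + 1) + (m + 1)).choose m
      = ∑ k ∈ range (m + 1), (m + 1).choose k * (m + 1).choose (m - k) := by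
    rw [Nat.add_choose_eq, Finset.Nat.sum_antidiagonal_eq_sum_range_succ_mk]
  have hcast : ∑ k ∈ range (m + 1), ((m + 1).choose k : ℝ) * ((m + 1).choose (m - k) : ℝ)
      = ((2 * m + 2).choose m : ℝ) := by
    rw [show 2 * m + 2 = (m + 1) + (m + 1) from by omega, hnat]; push_cast; rfl
  rw [hcast]; ring

lemma sum_antidiag_b01 (y : ℝ) (m : ℕ) :
    ∑ kl ∈ antidiagonal m, b0 y kl.1 * b1 y kl.2
      = y ^ (2 * m + 1) * ((2 * m + 1).choose m : ℝ) / ((m ! : ℝ) * ((m + 1)! : ℝ)) := by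
  rw [Finset.Nat.sum_antidiagonal_eq_sum_range_succ_mk]
  have step : ∀ k ∈ range (m + 1), b0 y k * b1 y (m - k)
      = ((m + 1).choose k : ℝ) * (m.choose (m - k) : ℝ) * y ^ (2 * m + 1)
          / ((m ! : ℝ) * ((m + 1)! : ℝ)) := by
    intro k hk
    have hkm : k ≤ m := Nat.lt_succ_iff.mp (mem_range.mp hk)
    have e : y ^ (2 * k) * y ^ (2 * (m - k) + 1) = y ^ (2 * m + 1) := by
      rw [← pow_add]; congr 1; omega
    calc b0 y k * b1 y (m - k)
        = (y ^ (2 * k) * y ^ (2 * (m - k) + 1))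
            * ((1:ℝ) / ((k ! : ℝ) * ((m - k)! : ℝ)))
            * ((1:ℝ) / ((k ! : ℝ) * ((m - k + 1)! : ℝ))) := by unfold b0 b1; ring
      _ = ((m + 1).choose k : ℝ) * (m.choose (m - k) : ℝ) * y ^ (2 * m + 1)
            / ((m ! : ℝ) * ((m + 1)! : ℝ)) := by
          rw [e, inv_fact_eq hkm, show m - k + 1 = m + 1 - k from by omega,
            inv_fact_eq (show k ≤ m + 1 from by omega), Nat.choose_symm hkm]
          ring
  rw [Finset.sum_congr rfl step, ← Finset.sum_div, ← Finset.sum_mul]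
  have hnat : ((m + 1) + m).choose m
      = ∑ k ∈ range (m + 1), (m + 1).choose k * m.choose (m - k) := by
    rw [Nat.add_choose_eq, Finset.Nat.sum_antidiagonal_eq_sum_range_succ_mk]
  have hcast : ∑ k ∈ range (m + 1), ((m + 1).choose k : ℝ) * (m.choose (m - k) : ℝ)
      = ((2 * m + 1).choose m : ℝ) := by
    rw [show 2 * m + 1 = (m + 1) + m from by omega, hnat]; push_cast; rfl
  rw [hcast]; ring

end BesselAux

namespace BesselAux

lemma idA (m : ℕ) : (m + 2) * ((2 * m + 3).choose (m + 1))
    = (2 * m + 3) * ((2 * m + 2).choose (m + 1)) := by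
  have hsymm : (2 * m + 3).choose (m + 1) = (2 * m + 3).choose (m + 2) := by
    rw [show m + 1 = 2 * m + 3 - (m + 2) from by omega]
    exact Nat.choose_symm (by omega)
  rw [hsymm]
  have h := Nat.add_one_mul_choose_eq (2 * m + 2) (m + 1)
  rw [show 2 * m + 2 + 1 = 2 * m + 3 from by omega, show m + 1 + 1 = m + 2 from by omega] at h
  linarith [h]

lemma idB (m : ℕ) : (m + 2) * ((2 * m + 2).choose m)
    = (m + 1) * ((2 * m + 2).choose (m + 1)) := by
  have h := Nat.choose_succ_right_eq (2 * m + 2) m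
  rw [show 2 * m + 2 - m = m + 2 from by omega] at h
  linarith [h]

lemma key1 (m : ℕ) : (2 * m + 3).choose (m + 1) + 2 * (m + 2) * ((2 * m + 2).choose m)
    < 2 * (m + 2) * ((2 * m + 2).choose (m + 1)) := by
  have hC1 : 0 < (2 * m + 2).choose (m + 1) := Nat.choose_pos (by omega)
  apply Nat.lt_of_mul_lt_mul_left (a := m + 2)
  calc (m + 2) * ((2 * m + 3).choose (m + 1) + 2 * (m + 2) * ((2 * m + 2).choose m))
      = (m + 2) * ((2 * m + 3).choose (m + 1))
        + 2 * (m + 2) * ((m + 2) * ((2 * m + 2).choose m)) := by ring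
    _ = (2 * m + 3) * ((2 * m + 2).choose (m + 1))
        + 2 * (m + 2) * ((m + 1) * ((2 * m + 2).choose (m + 1))) := by rw [idA, idB]
    _ < (m + 2) * (2 * (m + 2) * ((2 * m + 2).choose (m + 1))) := by nlinarith [hC1]

lemma key2 (m : ℕ) : (m + 2) * ((2 * m + 2).choose (m + 1))
    < (2 * m + 3).choose (m + 1) + (m + 2) * ((2 * m + 2).choose m) := by
  have hC1 : 0 < (2 * m + 2).choose (m + 1) := Nat.choose_pos (by omega)
  apply Nat.lt_of_mul_lt_mul_left (a := m + 2)
  have expand : (m + 2) * ((2 * m + 3).choose (m + 1) + (m + 2) * ((2 * m + 2).choose m))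
      = (2 * m + 3) * ((2 * m + 2).choose (m + 1))
        + (m + 2) * ((m + 1) * ((2 * m + 2).choose (m + 1))) := by
    rw [show (m + 2) * ((2 * m + 3).choose (m + 1) + (m + 2) * ((2 * m + 2).choose m))
      = (m + 2) * ((2 * m + 3).choose (m + 1)) + (m + 2) * ((m + 2) * ((2 * m + 2).choose m))
      from by ring, idA, idB]
  rw [expand]
  nlinarith [hC1]

end BesselAux

namespace BesselAux

noncomputable def P0 (y : ℝ) (m : ℕ) : ℝ :=
  y ^ (2 * m) * ((2 * m).choose m : ℝ) / ((m ! : ℝ) * (m ! : ℝ))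
noncomputable def P1 (y : ℝ) (m : ℕ) : ℝ :=
  y ^ (2 * m + 2) * ((2 * m + 2).choose m : ℝ) / (((m + 1)! : ℝ) * ((m + 1)! : ℝ))
noncomputable def P01 (y : ℝ) (m : ℕ) : ℝ :=
  y ^ (2 * m + 1) * ((2 * m + 1).choose m : ℝ) / ((m ! : ℝ) * ((m + 1)! : ℝ))

noncomputable def wP (y : ℝ) : ℕ → ℝ
  | 0 => 0
  | (m + 1) => 2 * y * P1 y m

lemma hn0 {y : ℝ} (hy : 0 ≤ y) : Summable (fun k => ‖b0 y k‖) := by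
  rw [norm_b0 hy]; exact summable_b0 hy

lemma hn1 {y : ℝ} (hy : 0 ≤ y) : Summable (fun k => ‖b1 y k‖) := by
  rw [norm_b1 hy]; exact summable_b1 hy

lemma prod00 {y : ℝ} (hy : 0 ≤ y) :
    (∑' k, b0 y k) * (∑' k, b0 y k) = ∑' m, P0 y m := by
  rw [tsum_mul_tsum_eq_tsum_sum_antidiagonal_of_summable_norm (hn0 hy) (hn0 hy)]
  exact tsum_congr (fun m => sum_antidiag_b0 y m)

lemma prod11 {y : ℝ} (hy : 0 ≤ y) :
    (∑' k, b1 y k) * (∑' k, b1 y k) = ∑' m, P1 y m := by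
  rw [tsum_mul_tsum_eq_tsum_sum_antidiagonal_of_summable_norm (hn1 hy) (hn1 hy)]
  exact tsum_congr (fun m => sum_antidiag_b1 y m)

lemma prod01 {y : ℝ} (hy : 0 ≤ y) :
    (∑' k, b0 y k) * (∑' k, b1 y k) = ∑' m, P01 y m := by
  rw [tsum_mul_tsum_eq_tsum_sum_antidiagonal_of_summable_norm (hn0 hy) (hn1 hy)]
  exact tsum_congr (fun m => sum_antidiag_b01 y m)

lemma summable_P0 {y : ℝ} (hy : 0 ≤ y) : Summable (P0 y) :=
  ((summable_norm_sum_mul_antidiagonal_of_summable_norm (hn0 hy) (hn0 hy)).of_norm).congr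
    (fun m => sum_antidiag_b0 y m)

lemma summable_P1 {y : ℝ} (hy : 0 ≤ y) : Summable (P1 y) :=
  ((summable_norm_sum_mul_antidiagonal_of_summable_norm (hn1 hy) (hn1 hy)).of_norm).congr
    (fun m => sum_antidiag_b1 y m)

lemma summable_P01 {y : ℝ} (hy : 0 ≤ y) : Summable (P01 y) :=
  ((summable_norm_sum_mul_antidiagonal_of_summable_norm (hn0 hy) (hn1 hy)).of_norm).congr
    (fun m => sum_antidiag_b01 y m)

lemma summable_wP_shift {y : ℝ} (hy : 0 ≤ y) : Summable (fun m => wP y (m + 1)) :=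
  (summable_P1 hy).mul_left (2 * y)

lemma summable_wP {y : ℝ} (hy : 0 ≤ y) : Summable (wP y) :=
  (summable_nat_add_iff 1).mp (summable_wP_shift hy)

lemma tsum_wP {y : ℝ} (hy : 0 ≤ y) : ∑' m, wP y m = 2 * y * ∑' m, P1 y m := by
  rw [tsum_eq_zero_add' (summable_wP_shift hy)]
  have h : (fun m => wP y (m + 1)) = fun m => 2 * y * P1 y m := rfl
  rw [show wP y 0 = 0 from rfl, zero_add, h, tsum_mul_left]

lemma fact2_real (m : ℕ) : ((m + 2)! : ℝ) = (m + 2) * ((m + 1)! : ℝ) := by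
  rw [show m + 2 = m + 1 + 1 from by omega, fact_succ_real]
  push_cast; ring

lemma u_pos {y : ℝ} (hy : 0 < y) (m : ℕ) :
    0 < 2 * y * P0 y m - wP y m - P01 y m := by
  cases m with
  | zero =>
    simp [P0, P01, wP, Nat.factorial]
    linarith
  | succ m =>
    have hf1 : ((m + 1)! : ℝ) ≠ 0 := (fact_pos (m + 1)).ne'
    have hnum : 0 < 2 * ((m : ℝ) + 2) * ((2 * m + 2).choose (m + 1) : ℝ)
        - ((2 * m + 3).choose (m + 1) : ℝ) - 2 * ((m : ℝ) + 2) * ((2 * m + 2).choose m : ℝ) := by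
      have hc := (Nat.cast_lt (α := ℝ)).mpr (key1 m)
      push_cast at hc
      linarith
    have hrepr : 2 * y * P0 y (m + 1) - wP y (m + 1) - P01 y (m + 1)
        = y ^ (2 * m + 3) * (2 * ((m : ℝ) + 2) * ((2 * m + 2).choose (m + 1) : ℝ)
            - ((2 * m + 3).choose (m + 1) : ℝ)
            - 2 * ((m : ℝ) + 2) * ((2 * m + 2).choose m : ℝ))
          / (((m + 1)! : ℝ) * ((m + 2)! : ℝ)) := by
      simp only [P0, P1, P01, wP]
      rw [show 2 * (m + 1) = 2 * m + 2 from by omega]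
      rw [show 2 * m + 2 + 1 = 2 * m + 3 from by omega,
        show m + 1 + 1 = m + 2 from by omega, fact2_real]
      field_simp
      ring
    rw [hrepr]
    apply div_pos (mul_pos (pow_pos hy _) hnum)
    have := fact_pos (m + 1)
    have := fact_pos (m + 2)
    positivity

lemma v_nonneg {y : ℝ} (hy : 0 < y) (m : ℕ) :
    0 ≤ 2 * P01 y m - 2 * y * P0 y m + wP y m := by
  cases m with
  | zero =>
    simp [P0, P01, wP, Nat.factorial]
  | succ m =>
    have hf1 : ((m + 1)! : ℝ) ≠ 0 := (fact_pos (m + 1)).ne'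
    have hnum : 0 < 2 * (((2 * m + 3).choose (m + 1) : ℝ)
        + ((m : ℝ) + 2) * ((2 * m + 2).choose m : ℝ)
        - ((m : ℝ) + 2) * ((2 * m + 2).choose (m + 1) : ℝ)) := by
      have hc := (Nat.cast_lt (α := ℝ)).mpr (key2 m)
      push_cast at hc
      linarith
    have hrepr : 2 * P01 y (m + 1) - 2 * y * P0 y (m + 1) + wP y (m + 1)
        = y ^ (2 * m + 3) * (2 * (((2 * m + 3).choose (m + 1) : ℝ)
            + ((m : ℝ) + 2) * ((2 * m + 2).choose m : ℝ)
            - ((m : ℝ) + 2) * ((2 * m + 2).choose (m + 1) : ℝ)))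
          / (((m + 1)! : ℝ) * ((m + 2)! : ℝ)) := by
      simp only [P0, P1, P01, wP]
      rw [show 2 * (m + 1) = 2 * m + 2 from by omega]
      rw [show 2 * m + 2 + 1 = 2 * m + 3 from by omega,
        show m + 1 + 1 = m + 2 from by omega, fact2_real]
      field_simp
      ring
    rw [hrepr]
    apply le_of_lt
    apply div_pos (mul_pos (pow_pos hy _) hnum)
    have := fact_pos (m + 1)
    have := fact_pos (m + 2)
    positivity

lemma v_one_pos {y : ℝ} (hy : 0 < y) :
    0 < 2 * P01 y 1 - 2 * y * P0 y 1 + wP y 1 := by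
  simp only [P0, P01, P1, wP]
  norm_num [Nat.factorial]
  nlinarith [pow_pos hy 3]

lemma E1_pos {r : ℝ} (hr : 0 < r) :
    0 < r * (besselI 0 r * besselI 0 r) - r * (besselI 1 r * besselI 1 r)
      - besselI 0 r * besselI 1 r := by
  have hy : 0 < r / 2 := by positivity
  have hu : Summable (fun m => 2 * (r / 2) * P0 (r / 2) m - wP (r / 2) m - P01 (r / 2) m) :=
    (((summable_P0 hy.le).mul_left (2 * (r / 2))).sub (summable_wP hy.le)).sub
      (summable_P01 hy.le)
  have hpos := Summable.tsum_pos hu (fun m => (u_pos hy m).le) 0 (u_pos hy 0)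
  have h1 : ∑' m, (2 * (r / 2) * P0 (r / 2) m - wP (r / 2) m - P01 (r / 2) m)
      = 2 * (r / 2) * (∑' m, P0 (r / 2) m) - 2 * (r / 2) * (∑' m, P1 (r / 2) m)
        - ∑' m, P01 (r / 2) m := by
    rw [Summable.tsum_sub (((summable_P0 hy.le).mul_left (2 * (r / 2))).sub (summable_wP hy.le))
      (summable_P01 hy.le),
      Summable.tsum_sub ((summable_P0 hy.le).mul_left (2 * (r / 2))) (summable_wP hy.le),
      tsum_mul_left, tsum_wP hy.le]
  rw [h1] at hpos
  rw [besselI_zero, besselI_one, prod00 hy.le, prod11 hy.le, prod01 hy.le]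
  have h2 : 2 * (r / 2) = r := by ring
  rw [h2] at hpos
  exact hpos

lemma E2_pos {r : ℝ} (hr : 0 < r) :
    0 < 2 * (besselI 0 r * besselI 1 r) - r * (besselI 0 r * besselI 0 r)
      + r * (besselI 1 r * besselI 1 r) := by
  have hy : 0 < r / 2 := by positivity
  have hv : Summable (fun m => 2 * P01 (r / 2) m - 2 * (r / 2) * P0 (r / 2) m + wP (r / 2) m) :=
    (((summable_P01 hy.le).mul_left 2).sub ((summable_P0 hy.le).mul_left (2 * (r / 2)))).add
      (summable_wP hy.le)
  have hpos := Summable.tsum_pos hv (fun m => v_nonneg hy m) 1 (v_one_pos hy)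
  have h1 : ∑' m, (2 * P01 (r / 2) m - 2 * (r / 2) * P0 (r / 2) m + wP (r / 2) m)
      = 2 * (∑' m, P01 (r / 2) m) - 2 * (r / 2) * (∑' m, P0 (r / 2) m)
        + 2 * (r / 2) * (∑' m, P1 (r / 2) m) := by
    rw [Summable.tsum_add (((summable_P01 hy.le).mul_left 2).sub
        ((summable_P0 hy.le).mul_left (2 * (r / 2)))) (summable_wP hy.le),
      Summable.tsum_sub ((summable_P01 hy.le).mul_left 2) ((summable_P0 hy.le).mul_left (2 * (r / 2))),
      tsum_mul_left, tsum_mul_left, tsum_wP hy.le]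
  rw [h1] at hpos
  rw [besselI_zero, besselI_one, prod00 hy.le, prod11 hy.le, prod01 hy.le]
  have h2 : 2 * (r / 2) = r := by ring
  rw [h2] at hpos
  exact hpos

end BesselAux

open BesselAux in
theorem mu_zero_pos (R_S : ℝ) (hR : 0 < R_S) :
    (1 / R_S) * (-1 + 1 / (R_S * besselI 2 R_S / besselI 1 R_S
      - R_S * besselI 1 R_S / besselI 0 R_S + 1)) > 0 := by
  have h0 := besselI_zero_pos hR
  have h1 := besselI_one_pos hR
  have hrec := besselI_two hR
  have hE1 := E1_pos hR
  have hE2 := E2_pos hR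
  set S0 := besselI 0 R_S with hS0def
  set S1 := besselI 1 R_S with hS1def
  set A := R_S * besselI 2 R_S / S1 - R_S * S1 / S0 + 1 with hAdef
  have hA_eq : A = (R_S * (S0 * S0) - R_S * (S1 * S1) - S0 * S1) / (S0 * S1) := by
    rw [hAdef, hrec]
    field_simp
    ring
  have hApos : 0 < A := by
    rw [hA_eq]
    exact div_pos hE1 (mul_pos h0 h1)
  have hAlt1 : A < 1 := by
    rw [hA_eq, div_lt_one (mul_pos h0 h1)]
    linarith
  have hinv : 1 < 1 / A := by
    rw [lt_div_iff₀ hApos, one_mul]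
    exact hAlt1
  have hfin : 0 < -1 + 1 / A := by linarith
  exact mul_pos (by positivity) hfin
end
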